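/- Let s ≥ 1 be an integer, Q₁ ≤ Q₂ reals in [0,s], f a nonincreasing function on [0,s] with f(0) ≤ s, and T a positive integer. Suppose that for any box (Q, Q+P₁] × (0, P₂] the count ∑ δ_s(uv ± 1) over integer points equals (φ(s)/s²)·P₁P₂ + O(ψ(s)) for some function ψ. Then ∑_{Q₁ < u ≤ Q₂} ∑_{0 < v ≤ f(u)} δ_s(uv ± 1) = (φ(s)/s²)·∫_{Q₁}^{Q₂} f(u) du + O((φ(s)/s²)·((Q₂−Q₁)/T)·(f(Q₁) − f(Q₂))) + O(T·ψ(s)). -/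

import Mathlib

set_option maxHeartbeats 1000000


open scoped Classical

/-- Partition indicator lemma: for a monotone sequence `Q`, the half-open intervals
`(Q i, Q (i+1)]` for `i < n` partition `(Q 0, Q n]`. -/
lemma hyperbolic_ind_partition (Q : ℕ → ℝ) (hQ : Monotone Q) (x : ℝ) (n : ℕ) :
    ∑ i ∈ Finset.range n, (if Q i < x ∧ x ≤ Q (i+1) then (1:ℝ) else 0)
      = if Q 0 < x ∧ x ≤ Q n then 1 else 0 := by
  induction n with
  | zero =>
    simp only [Finset.range_zero, Finset.sum_empty]
    rw [if_neg]
    rintro ⟨a, b⟩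
    linarith
  | succ n ih =>
    rw [Finset.sum_range_succ, ih]
    have h1 : Q 0 ≤ Q n := hQ (Nat.zero_le n)
    have h2 : Q n ≤ Q (n+1) := hQ (Nat.le_succ n)
    rcases lt_or_ge (Q n) x with hx | hx
    · have hx' : ¬ (x ≤ Q n) := not_le.mpr hx
      have h0 : Q 0 < x := lt_of_le_of_lt h1 hx
      simp [hx', hx, h0]
    · have hx' : ¬ (Q n < x) := not_lt.mpr hx
      have hxn : x ≤ Q (n+1) := le_trans hx h2
      simp [hx', hx, hxn]

lemma hyperbolic_ind_partition' (Q : ℕ → ℝ) (hQ : Monotone Q) (x : ℝ) (n : ℕ)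
    (R : Prop) [Decidable R] :
    ∑ i ∈ Finset.range n, (if Q i < x ∧ x ≤ Q (i+1) ∧ R then (1:ℝ) else 0)
      = if Q 0 < x ∧ x ≤ Q n ∧ R then 1 else 0 := by
  by_cases hR : R
  · simp only [hR, and_true]
    exact hyperbolic_ind_partition Q hQ x n
  · simp [hR]

/-- Ustinov-type smoothing: if box counts of solutions of `uv ≡ ∓1 (mod s)` satisfy
the asymptotic `(φ(s)/s²)P₁P₂ + O(ψ)`, then for a nonincreasing `f` the count under the
graph of `f` equals `(φ(s)/s²)∫f + O((φ(s)/s²)((Q₂−Q₁)/T)(f(Q₁)−f(Q₂))) + O(Tψ)`. -/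
theorem hyperbolic_region_count :
    ∃ C : ℝ, 0 < C ∧
      ∀ (s : ℕ), 1 ≤ s → ∀ (Q₁ Q₂ : ℝ), 0 ≤ Q₁ → Q₁ ≤ Q₂ → Q₂ ≤ (s : ℝ) →
      ∀ (f : ℝ → ℝ), AntitoneOn f (Set.Icc (0 : ℝ) (s : ℝ)) →
        (∀ u ∈ Set.Icc (0 : ℝ) (s : ℝ), 0 ≤ f u) → f 0 ≤ (s : ℝ) →
      ∀ (T : ℕ), 1 ≤ T → ∀ (ψ : ℝ), 0 ≤ ψ →
      ∀ (sgn : ℤ), sgn = 1 ∨ sgn = -1 →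
      (∀ Q P₁ P₂ : ℝ, 0 ≤ P₁ → P₁ ≤ (s : ℝ) → 0 ≤ P₂ → P₂ ≤ (s : ℝ) →
        |(∑ u ∈ Finset.Icc (1 : ℤ) (s : ℤ), ∑ v ∈ Finset.Icc (1 : ℤ) (s : ℤ),
            if Q < (u : ℝ) ∧ (u : ℝ) ≤ Q + P₁ ∧ (v : ℝ) ≤ P₂ ∧ (s : ℤ) ∣ (u * v + sgn)
            then (1 : ℝ) else 0) -
          ((Nat.totient s : ℝ) / (s : ℝ) ^ 2) * P₁ * P₂| ≤ ψ) →
      |(∑ u ∈ Finset.Icc (1 : ℤ) (s : ℤ), ∑ v ∈ Finset.Icc (1 : ℤ) (s : ℤ),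
          if Q₁ < (u : ℝ) ∧ (u : ℝ) ≤ Q₂ ∧ (v : ℝ) ≤ f u ∧ (s : ℤ) ∣ (u * v + sgn)
          then (1 : ℝ) else 0) -
        ((Nat.totient s : ℝ) / (s : ℝ) ^ 2) * ∫ u in Q₁..Q₂, f u| ≤
        C * (((Nat.totient s : ℝ) / (s : ℝ) ^ 2) * ((Q₂ - Q₁) / T) * (f Q₁ - f Q₂)
          + T * ψ) := by
  refine ⟨1, one_pos, ?_⟩
  intro s hs Q₁ Q₂ hQ₁0 hQ12 hQ2s f hf hfnn hf0 T hT ψ hψ sgn hsgn hbox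
  have hTpos : (0:ℝ) < T := by exact_mod_cast hT
  set D : ℝ := (Nat.totient s : ℝ) / (s : ℝ) ^ 2 with hD
  have hDnn : 0 ≤ D := by positivity
  set h : ℝ := (Q₂ - Q₁) / T with hh
  have hhnn : 0 ≤ h := div_nonneg (by linarith) hTpos.le
  set Q : ℕ → ℝ := fun i => Q₁ + i * h with hQdef
  have hQ0 : Q 0 = Q₁ := by simp [hQdef]
  have hQT : Q T = Q₂ := by
    simp only [hQdef, hh]
    field_simp
    ring
  have hQstep : ∀ i : ℕ, Q (i+1) = Q i + h := by
    intro i; simp only [hQdef]; push_cast; ring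
  have hQmono : Monotone Q := by
    intro a b hab
    simp only [hQdef]
    have : (a:ℝ) ≤ b := by exact_mod_cast hab
    nlinarith
  -- membership of Q i in [0, s]
  have hQmem : ∀ i : ℕ, i ≤ T → Q i ∈ Set.Icc (0:ℝ) (s:ℝ) := by
    intro i hi
    constructor
    · have : Q 0 ≤ Q i := hQmono (Nat.zero_le i)
      rw [hQ0] at this; linarith
    · have : Q i ≤ Q T := hQmono hi
      rw [hQT] at this; linarith
  have hfs : ∀ x ∈ Set.Icc (0:ℝ) (s:ℝ), f x ≤ (s:ℝ) := by
    intro x hx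
    have := hf (Set.left_mem_Icc.mpr (by positivity)) hx hx.1
    linarith
  have hhs : h ≤ (s:ℝ) := by
    have : h ≤ Q₂ - Q₁ := by
      rw [hh]
      exact div_le_self (by linarith) (by exact_mod_cast hT)
    linarith
  -- strip sums
  set S : ℕ → ℝ := fun i => ∑ u ∈ Finset.Icc (1 : ℤ) (s : ℤ), ∑ v ∈ Finset.Icc (1 : ℤ) (s : ℤ),
      if Q i < (u : ℝ) ∧ (u : ℝ) ≤ Q (i+1) ∧ (v : ℝ) ≤ f u ∧ (s : ℤ) ∣ (u * v + sgn)
      then (1 : ℝ) else 0 with hSdef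
  set I : ℕ → ℝ := fun i => ∫ u in (Q i)..(Q (i+1)), f u with hIdef
  -- splitting the total count
  have hsplit : (∑ u ∈ Finset.Icc (1 : ℤ) (s : ℤ), ∑ v ∈ Finset.Icc (1 : ℤ) (s : ℤ),
      if Q₁ < (u : ℝ) ∧ (u : ℝ) ≤ Q₂ ∧ (v : ℝ) ≤ f u ∧ (s : ℤ) ∣ (u * v + sgn)
      then (1 : ℝ) else 0) = ∑ i ∈ Finset.range T, S i := by
    simp only [hSdef]
    symm
    rw [Finset.sum_comm]
    refine Finset.sum_congr rfl fun u _ => ?_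
    rw [Finset.sum_comm]
    refine Finset.sum_congr rfl fun v _ => ?_
    rw [hyperbolic_ind_partition' Q hQmono (u:ℝ) T ((v:ℝ) ≤ f u ∧ (s:ℤ) ∣ (u*v+sgn)), hQ0, hQT]
  -- integrability on each subinterval
  have hint : ∀ k < T, IntervalIntegrable f MeasureTheory.volume (Q k) (Q (k+1)) := by
    intro k hk
    have hle : Q k ≤ Q (k+1) := hQmono (Nat.le_succ k)
    have hsub : Set.uIcc (Q k) (Q (k+1)) ⊆ Set.Icc (0:ℝ) (s:ℝ) := by
      rw [Set.uIcc_of_le hle]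
      exact Set.Icc_subset_Icc (hQmem k hk.le).1 (hQmem (k+1) hk).2
    exact (hf.mono hsub).intervalIntegrable
  -- splitting the integral
  have hIsplit : ∑ i ∈ Finset.range T, I i = ∫ u in Q₁..Q₂, f u := by
    simp only [hIdef]
    rw [intervalIntegral.sum_integral_adjacent_intervals hint, hQ0, hQT]
  -- per-strip estimate
  have hkey : ∀ i < T, |S i - D * I i| ≤ D * h * (f (Q i) - f (Q (i+1))) + ψ := by
    intro i hi
    have hmem1 : Q i ∈ Set.Icc (0:ℝ) (s:ℝ) := hQmem i hi.le
    have hmem2 : Q (i+1) ∈ Set.Icc (0:ℝ) (s:ℝ) := hQmem (i+1) hi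
    have hle : Q i ≤ Q (i+1) := hQmono (Nat.le_succ i)
    have hf1nn : 0 ≤ f (Q i) := hfnn _ hmem1
    have hf2nn : 0 ≤ f (Q (i+1)) := hfnn _ hmem2
    have hf1s : f (Q i) ≤ (s:ℝ) := hfs _ hmem1
    have hf2s : f (Q (i+1)) ≤ (s:ℝ) := hfs _ hmem2
    -- upper box
    have hup := hbox (Q i) h (f (Q i)) hhnn hhs hf1nn hf1s
    have hlo := hbox (Q i) h (f (Q (i+1))) hhnn hhs hf2nn hf2s
    rw [abs_le] at hup hlo
    -- S i ≤ upper box count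
    have hSup : S i ≤ ∑ u ∈ Finset.Icc (1 : ℤ) (s : ℤ), ∑ v ∈ Finset.Icc (1 : ℤ) (s : ℤ),
        if Q i < (u : ℝ) ∧ (u : ℝ) ≤ Q i + h ∧ (v : ℝ) ≤ f (Q i) ∧ (s : ℤ) ∣ (u * v + sgn)
        then (1 : ℝ) else 0 := by
      refine Finset.sum_le_sum fun u _ => Finset.sum_le_sum fun v _ => ?_
      have hAB : (Q i < (u:ℝ) ∧ (u:ℝ) ≤ Q (i+1) ∧ (v:ℝ) ≤ f u ∧ (s:ℤ) ∣ (u * v + sgn)) →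
          (Q i < (u:ℝ) ∧ (u:ℝ) ≤ Q i + h ∧ (v:ℝ) ≤ f (Q i) ∧ (s:ℤ) ∣ (u * v + sgn)) := by
        rintro ⟨ha, hb, hc, hd⟩
        have humem : (u:ℝ) ∈ Set.Icc (0:ℝ) (s:ℝ) :=
          ⟨le_trans hmem1.1 (le_of_lt ha), le_trans hb hmem2.2⟩
        have hfu : f (u:ℝ) ≤ f (Q i) := hf hmem1 humem (le_of_lt ha)
        exact ⟨ha, by rw [← hQstep i]; exact hb, le_trans hc hfu, hd⟩
      by_cases hA : Q i < (u:ℝ) ∧ (u:ℝ) ≤ Q (i+1) ∧ (v:ℝ) ≤ f u ∧ (s:ℤ) ∣ (u * v + sgn)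
      · rw [if_pos hA, if_pos (hAB hA)]
      · rw [if_neg hA]
        split <;> norm_num
    -- lower box count ≤ S i
    have hSlo : (∑ u ∈ Finset.Icc (1 : ℤ) (s : ℤ), ∑ v ∈ Finset.Icc (1 : ℤ) (s : ℤ),
        if Q i < (u : ℝ) ∧ (u : ℝ) ≤ Q i + h ∧ (v : ℝ) ≤ f (Q (i+1)) ∧ (s : ℤ) ∣ (u * v + sgn)
        then (1 : ℝ) else 0) ≤ S i := by
      refine Finset.sum_le_sum fun u _ => Finset.sum_le_sum fun v _ => ?_
      have hAB : (Q i < (u:ℝ) ∧ (u:ℝ) ≤ Q i + h ∧ (v:ℝ) ≤ f (Q (i+1)) ∧ (s:ℤ) ∣ (u * v + sgn)) →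
          (Q i < (u:ℝ) ∧ (u:ℝ) ≤ Q (i+1) ∧ (v:ℝ) ≤ f u ∧ (s:ℤ) ∣ (u * v + sgn)) := by
        rintro ⟨ha, hb, hc, hd⟩
        rw [← hQstep i] at hb
        have humem : (u:ℝ) ∈ Set.Icc (0:ℝ) (s:ℝ) :=
          ⟨le_trans hmem1.1 (le_of_lt ha), le_trans hb hmem2.2⟩
        have hfu : f (Q (i+1)) ≤ f (u:ℝ) := hf humem hmem2 hb
        exact ⟨ha, hb, le_trans hc hfu, hd⟩
      by_cases hA : Q i < (u:ℝ) ∧ (u:ℝ) ≤ Q i + h ∧ (v:ℝ) ≤ f (Q (i+1)) ∧ (s:ℤ) ∣ (u * v + sgn)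
      · rw [if_pos hA, if_pos (hAB hA)]
      · rw [if_neg hA]
        split <;> norm_num
    -- integral sandwich
    have hIup : I i ≤ h * f (Q i) := by
      simp only [hIdef]
      have hmono := intervalIntegral.integral_mono_on (μ := MeasureTheory.volume) hle
        (hint i hi) (intervalIntegrable_const (c := f (Q i)))
        (fun x hx => hf hmem1 ⟨le_trans hmem1.1 hx.1, le_trans hx.2 hmem2.2⟩ hx.1)
      have hconst : (∫ _x in (Q i)..(Q (i+1)), f (Q i)) = h * f (Q i) := by
        rw [intervalIntegral.integral_const, smul_eq_mul, hQstep i]; ring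
      rw [hconst] at hmono
      exact hmono
    have hIlo : h * f (Q (i+1)) ≤ I i := by
      simp only [hIdef]
      have hmono := intervalIntegral.integral_mono_on (μ := MeasureTheory.volume) hle
        (intervalIntegrable_const (c := f (Q (i+1)))) (hint i hi)
        (fun x hx => hf ⟨le_trans hmem1.1 hx.1, le_trans hx.2 hmem2.2⟩ hmem2 hx.2)
      have hconst : (∫ _x in (Q i)..(Q (i+1)), f (Q (i+1))) = h * f (Q (i+1)) := by
        rw [intervalIntegral.integral_const, smul_eq_mul, hQstep i]; ring
      rw [hconst] at hmono
      exact hmono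
    have hDIup : D * I i ≤ D * (h * f (Q i)) := mul_le_mul_of_nonneg_left hIup hDnn
    have hDIlo : D * (h * f (Q (i+1))) ≤ D * I i := mul_le_mul_of_nonneg_left hIlo hDnn
    have e1 : D * (h * f (Q i)) = D * h * f (Q i) := (mul_assoc _ _ _).symm
    have e2 : D * (h * f (Q (i+1))) = D * h * f (Q (i+1)) := (mul_assoc _ _ _).symm
    have e3 : D * h * (f (Q i) - f (Q (i+1))) = D * h * f (Q i) - D * h * f (Q (i+1)) := by ring
    rw [abs_le]
    constructor
    · rw [e3]; linarith [hlo.1, hSlo, hDIup, e1]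
    · rw [e3]; linarith [hup.2, hSup, hDIlo, e2]
  -- assemble
  rw [hsplit, ← hIsplit, Finset.mul_sum, ← Finset.sum_sub_distrib]
  calc |∑ i ∈ Finset.range T, (S i - D * I i)|
      ≤ ∑ i ∈ Finset.range T, |S i - D * I i| := Finset.abs_sum_le_sum_abs _ _
    _ ≤ ∑ i ∈ Finset.range T, (D * h * (f (Q i) - f (Q (i+1))) + ψ) :=
        Finset.sum_le_sum fun i hi => hkey i (Finset.mem_range.mp hi)
    _ = D * h * (f (Q 0) - f (Q T)) + T * ψ := by
        rw [Finset.sum_add_distrib, ← Finset.mul_sum, Finset.sum_range_sub' (fun i => f (Q i)) T]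
        simp [Finset.sum_const, mul_comm]
    _ ≤ 1 * (D * h * (f Q₁ - f Q₂) + T * ψ) := by
        rw [hQ0, hQT]
        linarith
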